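/- For X ≻ 0, D symmetric, f = g + h with g(X) = −log det X + tr(SX) and h(X) = ‖X‖_{1,Λ}, define δ := tr(∇g(X)^T D) + h(X+D) − h(X). For any σ ∈ (0,1) with δ < 0, there exists ᾱ > 0 such that for all 0 < α < ᾱ: X + αD is positive definite and f(X + αD) ≤ f(X) + σαδ. -/

import Mathlib

open Matrix BigOperators

/-- Weighted elementwise ℓ1 norm `‖X‖_{1,Λ} = Σᵢⱼ Λᵢⱼ|Xᵢⱼ|`. -/
noncomputable def norm1 {p : ℕ} (Λ X : Matrix (Fin p) (Fin p) ℝ) : ℝ :=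
  ∑ i, ∑ j, Λ i j * |X i j|

/-- The regularized negative log-likelihood `f(X) = −log det X + tr(SX) + ‖X‖_{1,Λ}`. -/
noncomputable def fobj {p : ℕ} (S Λ X : Matrix (Fin p) (Fin p) ℝ) : ℝ :=
  -Real.log X.det + Matrix.trace (S * X) + norm1 Λ X

lemma quad_abs_bound {p : ℕ} (E : Matrix (Fin p) (Fin p) ℝ) (w : Fin p → ℝ) :
    |w ⬝ᵥ E *ᵥ w| ≤ (∑ i, ∑ j, |E i j|) * (w ⬝ᵥ w) := by
  have hww : ∀ i j : Fin p, |w i * w j| ≤ w ⬝ᵥ w := by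
    intro i j
    have hnn : ∀ k ∈ Finset.univ, 0 ≤ w k * w k := fun k _ => mul_self_nonneg _
    have hi : w i * w i ≤ w ⬝ᵥ w := by
      simpa [dotProduct] using Finset.single_le_sum hnn (Finset.mem_univ i)
    have hj : w j * w j ≤ w ⬝ᵥ w := by
      simpa [dotProduct] using Finset.single_le_sum hnn (Finset.mem_univ j)
    refine abs_le.mpr ⟨by nlinarith, by nlinarith⟩
  have expand : w ⬝ᵥ E *ᵥ w = ∑ i, ∑ j, E i j * (w i * w j) := by
    simp only [dotProduct, Matrix.mulVec, Finset.mul_sum]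
    exact Finset.sum_congr rfl fun i _ => Finset.sum_congr rfl fun j _ => by ring
  rw [expand]
  calc |∑ i, ∑ j, E i j * (w i * w j)| ≤ ∑ i, |∑ j, E i j * (w i * w j)| :=
        Finset.abs_sum_le_sum_abs _ _
    _ ≤ ∑ i, ∑ j, |E i j * (w i * w j)| :=
        Finset.sum_le_sum fun i _ => Finset.abs_sum_le_sum_abs _ _
    _ ≤ ∑ i, ∑ j, |E i j| * (w ⬝ᵥ w) := by
        refine Finset.sum_le_sum fun i _ => Finset.sum_le_sum fun j _ => ?_
        rw [abs_mul]
        exact mul_le_mul_of_nonneg_left (hww i j) (abs_nonneg _)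
    _ = (∑ i, ∑ j, |E i j|) * (w ⬝ᵥ w) := by rw [Finset.sum_mul]; simp [Finset.sum_mul]

lemma hasDerivAt_det_one_add {p : ℕ} (M : Matrix (Fin p) (Fin p) ℝ) :
    HasDerivAt (fun α : ℝ => (1 + α • M).det) (Matrix.trace M) 0 := by
  have key : (fun α : ℝ => (1 + α • M).det) = fun α : ℝ =>
      1 + Matrix.trace M * α +
        (((1 + (Polynomial.X : Polynomial ℝ) • M.map Polynomial.C).det).divX.divX.eval α) * α ^ 2 :=
    funext fun α => Matrix.det_one_add_smul α M
  rw [key]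
  set Q := ((1 + (Polynomial.X : Polynomial ℝ) • M.map Polynomial.C).det).divX.divX
  have h1 : HasDerivAt (fun α : ℝ => Q.eval α * α ^ 2)
      (Q.derivative.eval 0 * 0 ^ 2 + Q.eval 0 * (2 * 0 ^ 1)) 0 :=
    (Q.hasDerivAt 0).mul (hasDerivAt_pow 2 0)
  have h2 : HasDerivAt (fun α : ℝ => 1 + Matrix.trace M * α) (Matrix.trace M) 0 := by
    simpa using ((hasDerivAt_id (0:ℝ)).const_mul (Matrix.trace M)).const_add 1
  have h3 := h2.add h1
  refine h3.congr_deriv ?_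
  simp

/-- For `X ≻ 0`, symmetric `D`, `∇g(X) = S − X⁻¹`,
`δ = tr(∇g(X)ᵀD) + ‖X+D‖_{1,Λ} − ‖X‖_{1,Λ} < 0` and `σ ∈ (0,1)`, there exists
`ᾱ > 0` such that for all `0 < α < ᾱ`, `X + αD ≻ 0` and
`f(X + αD) ≤ f(X) + σαδ` (Armijo line-search condition). -/
theorem armijo_condition_small_stepsize {p : ℕ} (S Λ X D : Matrix (Fin p) (Fin p) ℝ)
    (hX : X.PosDef) (hD : D.IsSymm) (hS : S.PosSemidef)
    (hΛs : Λ.IsSymm) (hΛ : ∀ i j, 0 ≤ Λ i j)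
    (σ : ℝ) (hσ : σ ∈ Set.Ioo (0 : ℝ) 1) (δ : ℝ)
    (hδdef : δ = Matrix.trace ((S - X⁻¹)ᵀ * D) + norm1 Λ (X + D) - norm1 Λ X)
    (hδneg : δ < 0) :
    ∃ abar : ℝ, 0 < abar ∧ ∀ α : ℝ, 0 < α → α < abar →
      (X + α • D).PosDef ∧ fobj S Λ (X + α • D) ≤ fobj S Λ X + σ * α * δ := by
  obtain ⟨hσ0, hσ1⟩ := hσ
  have hXsymm : Xᵀ = X := by have := hX.1; simpa [Matrix.IsHermitian] using this
  have hDh : D.IsHermitian := by simpa [Matrix.IsHermitian, Matrix.IsSymm] using hD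
  have hXdet : (0:ℝ) < X.det := hX.det_pos
  have hXunit : IsUnit X.det := isUnit_iff_ne_zero.mpr hXdet.ne'
  -- square root of X
  have hXpsd := hX.posSemidef
  obtain ⟨B, hBB, hBsymm⟩ : ∃ B : Matrix (Fin p) (Fin p) ℝ, B * B = X ∧ Bᵀ = B := by
    open scoped MatrixOrder in
    exact ⟨CFC.sqrt X, CFC.sqrt_mul_sqrt_self X hXpsd.nonneg,
      by have := (CFC.sqrt_nonneg X).posSemidef.1; simpa [Matrix.IsHermitian] using this⟩
  have hBdet : IsUnit B.det := by
    refine isUnit_iff_ne_zero.mpr fun h => hXdet.ne' ?_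
    rw [← hBB, Matrix.det_mul, h, mul_zero]
  set E := B⁻¹ * D * B⁻¹ with hEdef
  have hBEB : B * E * B = D := by
    rw [hEdef]
    calc B * (B⁻¹ * D * B⁻¹) * B = (B * B⁻¹) * D * (B⁻¹ * B) := by
          simp only [Matrix.mul_assoc]
      _ = D := by rw [Matrix.mul_nonsing_inv _ hBdet, Matrix.nonsing_inv_mul _ hBdet,
          Matrix.one_mul, Matrix.mul_one]
  set cE := (∑ i, ∑ j, |E i j|) with hcE
  have hcE0 : 0 ≤ cE := Finset.sum_nonneg fun i _ => Finset.sum_nonneg fun j _ => abs_nonneg _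
  -- positive definiteness for small α
  have hpos : ∀ α : ℝ, 0 < α → α < 1/(cE+1) → (X + α • D).PosDef := by
    intro α hα0 hα1
    have hαc : α * cE < 1 := by
      have h1 : α * (cE + 1) < 1 := (lt_div_iff₀ (by linarith : (0:ℝ) < cE + 1)).mp hα1
      nlinarith
    refine Matrix.posDef_iff_dotProduct_mulVec.mpr ⟨?_, ?_⟩
    · show (X + α • D)ᴴ = X + α • D
      simp [Matrix.conjTranspose_add, Matrix.conjTranspose_smul, hX.1.eq, hDh.eq, hXsymm, hD.eq]
    · intro v hv
      set w := B *ᵥ v with hw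
      have hw0 : w ≠ 0 := by
        intro h
        apply hv
        have hv' : B⁻¹ *ᵥ w = v := by
          rw [hw, Matrix.mulVec_mulVec, Matrix.nonsing_inv_mul _ hBdet, Matrix.one_mulVec]
        rw [← hv', h, Matrix.mulVec_zero]
      have hww : 0 < w ⬝ᵥ w := by
        have hnn : 0 ≤ w ⬝ᵥ w := by
          simpa [dotProduct] using
            Finset.sum_nonneg (fun k (_ : k ∈ Finset.univ) => mul_self_nonneg (w k))
        rcases hnn.lt_or_eq with h | h
        · exact h
        · exact absurd (dotProduct_self_eq_zero.mp h.symm) hw0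
      have hfact : X + α • D = B * (1 + α • E) * B := by
        rw [Matrix.mul_add, Matrix.mul_one, Matrix.add_mul, hBB, Matrix.mul_smul,
          Matrix.smul_mul, hBEB]
      have key : star v ⬝ᵥ (X + α • D) *ᵥ v = w ⬝ᵥ w + α * (w ⬝ᵥ E *ᵥ w) := by
        have hsv : star v = v := by simp
        rw [hsv, hfact, ← Matrix.mulVec_mulVec, ← Matrix.mulVec_mulVec,
          Matrix.dotProduct_mulVec]
        have hvB : Matrix.vecMul v B = w := by
          rw [← hBsymm, Matrix.vecMul_transpose]
        rw [hvB, Matrix.add_mulVec, Matrix.one_mulVec, Matrix.smul_mulVec,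
          dotProduct_add, dotProduct_smul, smul_eq_mul]
      rw [key]
      have hquad := abs_le.mp (quad_abs_bound E w)
      nlinarith [hquad.1, hquad.2, mul_pos hα0 hww]
  -- the smooth part and its derivative
  set M := X⁻¹ * D with hM
  have hdet_eq : ∀ α : ℝ, (X + α • D).det = X.det * (1 + α • M).det := by
    intro α
    rw [← Matrix.det_mul]
    congr 1
    rw [Matrix.mul_add, Matrix.mul_one, Matrix.mul_smul, hM, ← Matrix.mul_assoc,
      Matrix.mul_nonsing_inv _ hXunit, Matrix.one_mul]
  have hdet : HasDerivAt (fun α : ℝ => (X + α • D).det) (X.det * Matrix.trace M) 0 := by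
    have h := (hasDerivAt_det_one_add M).const_mul X.det
    have : (fun α : ℝ => X.det * (1 + α • M).det) = fun α : ℝ => (X + α • D).det :=
      funext fun α => (hdet_eq α).symm
    rwa [this] at h
  have hlog : HasDerivAt (fun α : ℝ => Real.log (X + α • D).det) (Matrix.trace M) 0 := by
    have hne : (X + (0:ℝ) • D).det ≠ 0 := by simpa using hXdet.ne'
    have h := hdet.log hne
    convert h using 1
    have h0 : (X + (0:ℝ) • D).det = X.det := by simp
    rw [h0]
    field_simp
  set t := Matrix.trace (S * D) - Matrix.trace (X⁻¹ * D) with ht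
  set Gf : ℝ → ℝ := fun α => -Real.log (X + α • D).det + Matrix.trace (S * (X + α • D))
    with hGf
  have hG : HasDerivAt Gf t 0 := by
    have h2 : HasDerivAt (fun α : ℝ => Matrix.trace (S * (X + α • D)))
        (Matrix.trace (S * D)) 0 := by
      have heq : (fun α : ℝ => Matrix.trace (S * (X + α • D)))
          = fun α : ℝ => Matrix.trace (S * X) + α * Matrix.trace (S * D) := by
        funext α
        rw [Matrix.mul_add, Matrix.trace_add, Matrix.mul_smul, Matrix.trace_smul,
          smul_eq_mul]
      rw [heq]
      simpa using ((hasDerivAt_id (0:ℝ)).mul_const (Matrix.trace (S * D))).const_add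
        (Matrix.trace (S * X))
    have h3 := (hlog.neg).add h2
    refine h3.congr_deriv ?_
    rw [ht]; ring
  -- δ = t + (norm1 Λ (X+D) - norm1 Λ X)
  have hδ : δ = t + (norm1 Λ (X + D) - norm1 Λ X) := by
    rw [hδdef, ht]
    have hS' : Sᵀ = S := by have := hS.1; simpa [Matrix.IsHermitian] using this
    have hXi : (X⁻¹)ᵀ = X⁻¹ := by rw [Matrix.transpose_nonsing_inv, hXsymm]
    rw [Matrix.transpose_sub, Matrix.sub_mul, Matrix.trace_sub, hS', hXi]
    ring
  -- convexity of norm1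
  have hconv : ∀ α : ℝ, 0 ≤ α → α ≤ 1 →
      norm1 Λ (X + α • D) ≤ (1 - α) * norm1 Λ X + α * norm1 Λ (X + D) := by
    intro α h0 h1
    unfold norm1
    rw [Finset.mul_sum, Finset.mul_sum, ← Finset.sum_add_distrib]
    refine Finset.sum_le_sum fun i _ => ?_
    rw [Finset.mul_sum, Finset.mul_sum, ← Finset.sum_add_distrib]
    refine Finset.sum_le_sum fun j _ => ?_
    have hentry : (X + α • D) i j = (1 - α) * X i j + α * ((X + D) i j) := by
      simp [Matrix.add_apply, Matrix.smul_apply]; ring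
    rw [hentry]
    calc Λ i j * |(1 - α) * X i j + α * ((X + D) i j)|
        ≤ Λ i j * ((1 - α) * |X i j| + α * |(X + D) i j|) := by
          refine mul_le_mul_of_nonneg_left ?_ (hΛ i j)
          calc |(1 - α) * X i j + α * ((X + D) i j)|
              ≤ |(1 - α) * X i j| + |α * ((X + D) i j)| := abs_add_le _ _
            _ = (1 - α) * |X i j| + α * |(X + D) i j| := by
                rw [abs_mul, abs_mul, abs_of_nonneg (by linarith), abs_of_nonneg h0]
      _ = (1 - α) * (Λ i j * |X i j|) + α * (Λ i j * |(X + D) i j|) := by ring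
  -- little-o argument
  set ε := (1 - σ) * (-δ) with hε
  have hε0 : 0 < ε := mul_pos (by linarith) (by linarith)
  have hlo := hasDerivAt_iff_isLittleO.mp hG
  rw [Asymptotics.isLittleO_iff] at hlo
  have hev := hlo hε0
  rw [Metric.eventually_nhds_iff] at hev
  obtain ⟨η, hη0, hη⟩ := hev
  refine ⟨min (1/(cE+1)) (min η 1), ?_, ?_⟩
  · have : (0:ℝ) < 1/(cE+1) := by positivity
    exact lt_min this (lt_min hη0 one_pos)
  intro α hα0 hαlt
  have hα1 : α < 1/(cE+1) := lt_of_lt_of_le hαlt (min_le_left _ _)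
  have hαη : α < η := lt_of_lt_of_le hαlt ((min_le_right _ _).trans (min_le_left _ _))
  have hαle1 : α ≤ 1 :=
    le_of_lt (lt_of_lt_of_le hαlt ((min_le_right _ _).trans (min_le_right _ _)))
  refine ⟨hpos α hα0 hα1, ?_⟩
  have hdist : dist α (0:ℝ) < η := by
    simpa [Real.dist_eq, abs_of_pos hα0] using hαη
  have hGb := hη hdist
  rw [Real.norm_eq_abs, Real.norm_eq_abs, sub_zero, smul_eq_mul] at hGb
  rw [abs_of_pos hα0] at hGb
  have hGbound : Gf α ≤ Gf 0 + α * t + ε * α := by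
    have := (abs_le.mp hGb).2
    linarith
  have hG0 : Gf 0 = -Real.log X.det + Matrix.trace (S * X) := by
    simp [hGf]
  have hfsplit : fobj S Λ (X + α • D) = Gf α + norm1 Λ (X + α • D) := by
    simp [fobj, hGf]
  have hfX : fobj S Λ X = Gf 0 + norm1 Λ X := by
    rw [hG0]; simp [fobj]
  have hc := hconv α (le_of_lt hα0) hαle1
  rw [hfsplit, hfX]
  have : Gf α + norm1 Λ (X + α • D)
      ≤ Gf 0 + α * t + ε * α + (1 - α) * norm1 Λ X + α * norm1 Λ (X + D) := by
    linarith
  have hfinal : α * t + ε * α + (1 - α) * norm1 Λ X + α * norm1 Λ (X + D)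
      = norm1 Λ X + σ * α * δ := by
    rw [hε]
    have : t = δ - (norm1 Λ (X + D) - norm1 Λ X) := by linarith [hδ]
    rw [this]; ring
  linarith
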